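/- Let M be a matroid, let S be an independent set with an enumeration S = {x₁, …, x_j}, and let e ∉ S be an element such that {e} is independent but S ∪ {e} is dependent. Let i* := max{ i ∈ {1, …, j} : {x₁, …, x_{i−1}} ∪ {e} is independent } (the maximum exists because {e} is independent). Then (S \ {x_{i*}}) ∪ {e} is independent. -/
import Mathlib


open Finset

attribute [local instance] Classical.propDecidable

universe u

/-- A matroid on a ground set `α`, given as a nonempty, downward closed family of
finite independent sets satisfying the augmentation property. -/
structure MatroidOn (α : Type u) where
  Indep : Finset α → Prop
  nonempty : ∃ A, Indep A
  subset_indep : ∀ ⦃A B : Finset α⦄, A ⊆ B → Indep B → Indep A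
  augment : ∀ ⦃A B : Finset α⦄, Indep A → Indep B → A.card < B.card →
    ∃ e ∈ B, e ∉ A ∧ Indep (insert e A)

/-- Submodularity of a set function. -/
def SubmodularFn {α : Type u} [DecidableEq α] (f : Finset α → ℝ) : Prop :=
  ∀ X Y : Finset α, X ⊆ Y → ∀ e, e ∉ Y →
    f (insert e Y) - f Y ≤ f (insert e X) - f X

/-- Monotonicity of a set function. -/
def MonotoneFn {α : Type u} (f : Finset α → ℝ) : Prop :=
  ∀ X Y : Finset α, X ⊆ Y → f X ≤ f Y

variable {α : Type u} [DecidableEq α]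

/-- The marginal gain `f(e | T) = f (T ∪ {e}) - f T`. -/
def marg (f : Finset α → ℝ) (T : Finset α) (e : α) : ℝ := f (insert e T) - f T

theorem swap_candidate_is_independent
    (M : MatroidOn α) {j : ℕ} (x : Fin j → α) (hinj : Function.Injective x)
    (S : Finset α) (hS : S = Finset.univ.image x) (hSind : M.Indep S)
    (e : α) (heS : e ∉ S) (heI : M.Indep {e}) (hdep : ¬ M.Indep (insert e S))
    (istar : Fin j)
    (histar : M.Indep (insert e ((Finset.univ.filter fun t => t < istar).image x)))
    (hmax : ∀ t : Fin j,
      M.Indep (insert e ((Finset.univ.filter fun s => s < t).image x)) → t ≤ istar) :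
    M.Indep (insert e (S.erase (x istar))) := by
  classical
  set A : Finset α := insert e ((Finset.univ.filter fun t => t < istar).image x) with hA
  have hxS : ∀ t : Fin j, x t ∈ S := by
    intro t; rw [hS]; exact mem_image_of_mem x (mem_univ t)
  have hcardS : S.card = j := by
    rw [hS, card_image_of_injective _ hinj, card_univ, Fintype.card_fin]
  -- key: insert (x istar) A is dependent
  have hkey : ¬ M.Indep (insert (x istar) A) := by
    intro h
    have hins : insert (x istar) A
        = insert e ((Finset.univ.filter fun s => s ≤ istar).image x) := by
      rw [hA, Finset.insert_comm]
      congr 1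
      rw [← image_insert]
      congr 1
      ext s
      simp only [mem_insert, mem_filter, mem_univ, true_and]
      show s = istar ∨ (s : ℕ) < (istar : ℕ) ↔ (s : ℕ) ≤ (istar : ℕ)
      rw [Fin.ext_iff]
      omega
    by_cases hlast : (istar : ℕ) + 1 = j
    · -- filter (· ≤ istar) = univ
      have : (Finset.univ.filter fun s : Fin j => s ≤ istar) = Finset.univ := by
        ext s
        simp only [mem_filter, mem_univ, true_and, iff_true]
        show (s : ℕ) ≤ (istar : ℕ)
        have := s.isLt
        omega
      rw [hins, this, ← hS] at h
      exact hdep h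
    · have hlt : (istar : ℕ) + 1 < j := lt_of_le_of_ne istar.isLt.nat_succ_le hlast
      have hfeq : (Finset.univ.filter fun s : Fin j => s < (⟨(istar : ℕ) + 1, hlt⟩ : Fin j))
          = (Finset.univ.filter fun s : Fin j => s ≤ istar) := by
        ext s
        simp only [mem_filter, mem_univ, true_and]
        show (s : ℕ) < (istar : ℕ) + 1 ↔ (s : ℕ) ≤ (istar : ℕ)
        omega
      have h2 : (⟨(istar : ℕ) + 1, hlt⟩ : Fin j) ≤ istar :=
        hmax _ (by rw [hfeq, ← hins]; exact h)
      have h3 : (istar : ℕ) + 1 ≤ (istar : ℕ) := h2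
      omega
  -- A ⊆ insert e (S.erase (x istar))
  have hAsub : A ⊆ insert e (S.erase (x istar)) := by
    rw [hA]
    apply insert_subset_insert
    intro a ha
    obtain ⟨t, ht, rfl⟩ := mem_image.mp ha
    have htlt : t < istar := (mem_filter.mp ht).2
    exact mem_erase.mpr ⟨fun h => absurd (hinj h) (ne_of_lt htlt), hxS t⟩
  have hAcard : A.card ≤ j := by
    calc A.card ≤ (insert e (S.erase (x istar))).card := card_le_card hAsub
    _ = (S.erase (x istar)).card + 1 := card_insert_of_notMem
        (fun h => heS (mem_of_mem_erase h))
    _ = j := by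
        rw [card_erase_of_mem (hxS istar), hcardS]
        have := istar.pos
        omega
  -- induction: grow T
  have hgrow : ∀ k, A.card ≤ k → k ≤ j →
      ∃ T, M.Indep T ∧ A ⊆ T ∧ T ⊆ insert e (S.erase (x istar)) ∧ T.card = k := by
    intro k
    induction k with
    | zero => intro h1 h2; exact ⟨A, histar, subset_rfl, hAsub, Nat.le_zero.mp h1⟩
    | succ k ih =>
      intro h1 h2
      rcases Nat.lt_or_ge k A.card with hk | hk
      · have : A.card = k + 1 := le_antisymm h1 hk
        exact ⟨A, histar, subset_rfl, hAsub, this⟩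
      · obtain ⟨T, hTind, hAT, hTsub, hTcard⟩ := ih hk (Nat.le_of_succ_le h2)
        obtain ⟨a, haS, haT, haind0⟩ := M.augment hTind hSind (by omega)
        have haind : M.Indep (insert a T) := by
          convert haind0 using 3
        have hane : a ≠ x istar := by
          intro h; subst h
          exact hkey (M.subset_indep (insert_subset_insert _ hAT) haind)
        refine ⟨insert a T, haind, hAT.trans (subset_insert _ _), ?_, ?_⟩
        · exact insert_subset (mem_insert_of_mem (mem_erase.mpr ⟨hane, haS⟩)) hTsub
        · rw [card_insert_of_notMem haT, hTcard]
  obtain ⟨T, hTind, hAT, hTsub, hTcard⟩ := hgrow j hAcard le_rfl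
  have hcard2 : (insert e (S.erase (x istar))).card = j := by
    rw [card_insert_of_notMem (fun h => heS (mem_of_mem_erase h)),
      card_erase_of_mem (hxS istar), hcardS]
    have := istar.pos
    omega
  have : T = insert e (S.erase (x istar)) :=
    Finset.eq_of_subset_of_card_le hTsub (by omega)
  rwa [← this]
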